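/- Fix y ∈ ℝ, ε > 0 and ν > 0, and define Ψ₀(m) = ∫ 2·max(0, |y − η| − ε) φ(η; m, ν²) dη. Then for every m ∈ ℝ, the second derivative of Ψ₀ with respect to m equals 2[ φ(y + ε; m, ν²) + φ(y − ε; m, ν²) ]. -/

import Mathlib

open MeasureTheory Real Filter

open Set

/-- Gaussian density with mean `m` and variance `ν ^ 2`, evaluated at `x`:
`φ(x; m, ν²) = (2πν²)^{-1/2} exp(−(x−m)²/(2ν²))`. -/
noncomputable def gpdf (m ν x : ℝ) : ℝ :=
  (Real.sqrt (2 * Real.pi * ν ^ 2))⁻¹ * Real.exp (-((x - m) ^ 2) / (2 * ν ^ 2))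

/-- Gaussian cumulative distribution function with mean `m` and variance `ν ^ 2`:
`Φ(c; m, ν²) = ∫_{−∞}^{c} φ(η; m, ν²) dη`. -/
noncomputable def gcdf (m ν c : ℝ) : ℝ := ∫ x in Set.Iio c, gpdf m ν x

/-- Gaussian survival function: `∫_{c}^{∞} φ(η; m, ν²) dη`. -/
noncomputable def gsf (m ν c : ℝ) : ℝ := ∫ x in Set.Ioi c, gpdf m ν x

lemma gpdf_shift (m ν x : ℝ) : gpdf m ν x = gpdf 0 ν (x - m) := by simp [gpdf]

lemma gpdf_cont (m ν : ℝ) : Continuous (gpdf m ν) := by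
  unfold gpdf; fun_prop

lemma integrable_gpdf {ν : ℝ} (hν : 0 < ν) (m : ℝ) : Integrable (gpdf m ν) := by
  have hb : (0:ℝ) < (2 * ν ^ 2)⁻¹ := by positivity
  have h := ((integrable_exp_neg_mul_sq hb).const_mul
    (Real.sqrt (2 * Real.pi * ν ^ 2))⁻¹).comp_sub_right m
  refine h.congr (Filter.Eventually.of_forall fun x => ?_)
  unfold gpdf
  ring_nf

lemma integrable_sub_mul_gpdf {ν : ℝ} (hν : 0 < ν) (m c : ℝ) :
    Integrable (fun x => (x - c) * gpdf m ν x) := by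
  have hb : (0:ℝ) < (2 * ν ^ 2)⁻¹ := by positivity
  have h1 := (((integrable_mul_exp_neg_mul_sq hb).const_mul
    (Real.sqrt (2 * Real.pi * ν ^ 2))⁻¹).comp_sub_right m)
  have h2 := (integrable_gpdf hν m).const_mul (m - c)
  refine (h1.add h2).congr (Filter.Eventually.of_forall fun x => ?_)
  simp only [Pi.add_apply]
  unfold gpdf
  ring_nf

lemma integrable_sub_mul_gpdf' {ν : ℝ} (hν : 0 < ν) (m c : ℝ) :
    Integrable (fun x => (c - x) * gpdf m ν x) := by
  refine (integrable_sub_mul_gpdf hν m c).neg.congr (Eventually.of_forall fun x => ?_)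
  simp; ring

lemma hasDerivAt_gpdf_x {ν : ℝ} (hν : 0 < ν) (m x : ℝ) :
    HasDerivAt (gpdf m ν) ((m - x) / ν ^ 2 * gpdf m ν x) x := by
  have hu : HasDerivAt (fun x : ℝ => -((x - m) ^ 2) / (2 * ν ^ 2))
      (-(2 * (x - m)) / (2 * ν ^ 2)) x := by
    have := (((hasDerivAt_id x).sub_const m).pow 2).neg.div_const (2 * ν ^ 2)
    simpa using this
  have h := (hu.exp).const_mul (Real.sqrt (2 * Real.pi * ν ^ 2))⁻¹
  refine h.congr_deriv ?_
  unfold gpdf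
  have hν2 : (ν:ℝ) ^ 2 ≠ 0 := by positivity
  field_simp
  ring

lemma tendsto_gpdf_atTop {ν : ℝ} (hν : 0 < ν) (m : ℝ) :
    Tendsto (gpdf m ν) atTop (nhds 0) := by
  have h1 : Tendsto (fun x : ℝ => -((x - m) ^ 2) / (2 * ν ^ 2)) atTop atBot := by
    apply Tendsto.atBot_div_const (by positivity)
    apply tendsto_neg_atBot_iff.mpr
    have h : Tendsto (fun x : ℝ => x - m) atTop atTop :=
      tendsto_atTop_add_const_right _ (-m) tendsto_id
    simpa [sq] using h.atTop_mul_atTop₀ h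
  have := (Real.tendsto_exp_atBot.comp h1).const_mul (Real.sqrt (2 * Real.pi * ν ^ 2))⁻¹
  unfold gpdf; simpa [Function.comp] using this

lemma tendsto_gpdf_atBot {ν : ℝ} (hν : 0 < ν) (m : ℝ) :
    Tendsto (gpdf m ν) atBot (nhds 0) := by
  have h1 : Tendsto (fun x : ℝ => -((x - m) ^ 2) / (2 * ν ^ 2)) atBot atBot := by
    apply Tendsto.atBot_div_const (by positivity)
    apply tendsto_neg_atBot_iff.mpr
    have h : Tendsto (fun x : ℝ => x - m) atBot atBot :=
      tendsto_atBot_add_const_right _ (-m) tendsto_id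
    simpa [sq] using h.atBot_mul_atBot₀ h
  have := (Real.tendsto_exp_atBot.comp h1).const_mul (Real.sqrt (2 * Real.pi * ν ^ 2))⁻¹
  unfold gpdf; simpa [Function.comp] using this

lemma hasDerivAt_gcdf_c {ν : ℝ} (hν : 0 < ν) (m c : ℝ) :
    HasDerivAt (gcdf m ν) (gpdf m ν c) c := by
  have key : gcdf m ν = fun t => (∫ x in Iic (0:ℝ), gpdf m ν x) + ∫ x in (0:ℝ)..t, gpdf m ν x := by
    funext t
    rw [gcdf, ← integral_Iic_eq_integral_Iio,
      ← intervalIntegral.integral_Iic_sub_Iic ((integrable_gpdf hν m).integrableOn)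
        ((integrable_gpdf hν m).integrableOn)]
    ring
  rw [key]
  exact (intervalIntegral.integral_hasDerivAt_right
    ((integrable_gpdf hν m).intervalIntegrable)
    ((gpdf_cont m ν).stronglyMeasurableAtFilter _ _)
    (gpdf_cont m ν).continuousAt).const_add _

lemma hasDerivAt_gsf_c {ν : ℝ} (hν : 0 < ν) (m c : ℝ) :
    HasDerivAt (gsf m ν) (-(gpdf m ν c)) c := by
  have key : gsf m ν = fun t => (∫ x, gpdf m ν x) - gcdf m ν t := by
    funext t
    rw [gcdf, ← integral_Iic_eq_integral_Iio, gsf, eq_sub_iff_add_eq, add_comm]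
    exact intervalIntegral.integral_Iic_add_Ioi ((integrable_gpdf hν m).integrableOn)
      ((integrable_gpdf hν m).integrableOn)
  rw [key]
  exact (hasDerivAt_gcdf_c hν m c).const_sub _

lemma setIntegral_Iio_shift (f : ℝ → ℝ) (m c : ℝ) :
    ∫ x in Iio c, f (x - m) = ∫ x in Iio (c - m), f x := by
  rw [← integral_indicator measurableSet_Iio, ← integral_indicator measurableSet_Iio]
  have h : ∀ x : ℝ, (Iio c).indicator (fun x => f (x - m)) x
      = (Iio (c - m)).indicator f (x - m) := by
    intro x
    simp [Set.indicator_apply, sub_lt_sub_iff_right]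
  simp_rw [h]
  exact integral_sub_right_eq_self _ m

lemma setIntegral_Ioi_shift (f : ℝ → ℝ) (m c : ℝ) :
    ∫ x in Ioi c, f (x - m) = ∫ x in Ioi (c - m), f x := by
  rw [← integral_indicator measurableSet_Ioi, ← integral_indicator measurableSet_Ioi]
  have h : ∀ x : ℝ, (Ioi c).indicator (fun x => f (x - m)) x
      = (Ioi (c - m)).indicator f (x - m) := by
    intro x
    simp [Set.indicator_apply, sub_lt_sub_iff_right]
  simp_rw [h]
  exact integral_sub_right_eq_self _ m

lemma gcdf_shift (m ν c : ℝ) : gcdf m ν c = gcdf 0 ν (c - m) := by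
  rw [gcdf, gcdf]
  simp_rw [gpdf_shift m ν]
  exact setIntegral_Iio_shift _ m c

lemma gsf_shift (m ν c : ℝ) : gsf m ν c = gsf 0 ν (c - m) := by
  rw [gsf, gsf]
  simp_rw [gpdf_shift m ν]
  exact setIntegral_Ioi_shift _ m c

lemma hasDerivAt_gcdf_m {ν : ℝ} (hν : 0 < ν) (c m : ℝ) :
    HasDerivAt (fun m' => gcdf m' ν c) (-(gpdf m ν c)) m := by
  have key : (fun m' => gcdf m' ν c) = fun m' => gcdf 0 ν (c - m') :=
    funext fun m' => gcdf_shift m' ν c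
  rw [key]
  have h := (hasDerivAt_gcdf_c hν 0 (c - m)).comp m ((hasDerivAt_id m).const_sub c)
  refine h.congr_deriv ?_
  rw [gpdf_shift m ν c]; ring

lemma hasDerivAt_gsf_m {ν : ℝ} (hν : 0 < ν) (c m : ℝ) :
    HasDerivAt (fun m' => gsf m' ν c) (gpdf m ν c) m := by
  have key : (fun m' => gsf m' ν c) = fun m' => gsf 0 ν (c - m') :=
    funext fun m' => gsf_shift m' ν c
  rw [key]
  have h := (hasDerivAt_gsf_c hν 0 (c - m)).comp m ((hasDerivAt_id m).const_sub c)
  refine h.congr_deriv ?_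
  rw [gpdf_shift m ν c]; ring

lemma hasDerivAt_gpdf_m {ν : ℝ} (hν : 0 < ν) (c m : ℝ) :
    HasDerivAt (fun m' => gpdf m' ν c) ((c - m) / ν ^ 2 * gpdf m ν c) m := by
  have key : (fun m' => gpdf m' ν c) = fun m' => gpdf 0 ν (c - m') :=
    funext fun m' => gpdf_shift m' ν c
  rw [key]
  have h := (hasDerivAt_gpdf_x hν 0 (c - m)).comp m ((hasDerivAt_id m).const_sub c)
  refine h.congr_deriv ?_
  rw [gpdf_shift m ν c]; ring

lemma int_Ioi {ν : ℝ} (hν : 0 < ν) (m a : ℝ) :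
    ∫ x in Ioi a, (x - a) * gpdf m ν x = (m - a) * gsf m ν a + ν ^ 2 * gpdf m ν a := by
  have hsplit : ∀ x : ℝ, (x - a) * gpdf m ν x
      = (x - m) * gpdf m ν x + (m - a) * gpdf m ν x := fun x => by ring
  simp_rw [hsplit]
  rw [integral_add ((integrable_sub_mul_gpdf hν m m).integrableOn)
    (((integrable_gpdf hν m).const_mul _).integrableOn), integral_const_mul]
  have hd : ∀ x ∈ Ici a, HasDerivAt (fun x => -(ν ^ 2 * gpdf m ν x)) ((x - m) * gpdf m ν x) x := by
    intro x _
    have h := ((hasDerivAt_gpdf_x hν m x).const_mul (ν ^ 2)).neg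
    refine h.congr_deriv ?_
    have hν2 : (ν:ℝ) ^ 2 ≠ 0 := by positivity
    field_simp
    ring
  have htd : Tendsto (fun x => -(ν ^ 2 * gpdf m ν x)) atTop (nhds 0) := by
    have := ((tendsto_gpdf_atTop hν m).const_mul (ν ^ 2)).neg
    simpa using this
  have key := integral_Ioi_of_hasDerivAt_of_tendsto' hd
    ((integrable_sub_mul_gpdf hν m m).integrableOn) htd
  rw [key, gsf]
  ring

lemma int_Iio {ν : ℝ} (hν : 0 < ν) (m b : ℝ) :
    ∫ x in Iio b, (b - x) * gpdf m ν x = (b - m) * gcdf m ν b + ν ^ 2 * gpdf m ν b := by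
  have hsplit : ∀ x : ℝ, (b - x) * gpdf m ν x
      = (m - x) * gpdf m ν x + (b - m) * gpdf m ν x := fun x => by ring
  simp_rw [hsplit]
  rw [integral_add ((integrable_sub_mul_gpdf' hν m m).integrableOn)
    (((integrable_gpdf hν m).const_mul _).integrableOn), integral_const_mul]
  have hd : ∀ x ∈ Iic b, HasDerivAt (fun x => ν ^ 2 * gpdf m ν x) ((m - x) * gpdf m ν x) x := by
    intro x _
    have h := (hasDerivAt_gpdf_x hν m x).const_mul (ν ^ 2)
    refine h.congr_deriv ?_
    have hν2 : (ν:ℝ) ^ 2 ≠ 0 := by positivity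
    field_simp
  have htd : Tendsto (fun x => ν ^ 2 * gpdf m ν x) atBot (nhds 0) := by
    have := (tendsto_gpdf_atBot hν m).const_mul (ν ^ 2)
    simpa using this
  have key := integral_Iic_of_hasDerivAt_of_tendsto' hd
    ((integrable_sub_mul_gpdf' hν m m).integrableOn) htd
  rw [← integral_Iic_eq_integral_Iio, key, gcdf, ← integral_Iic_eq_integral_Iio]
  ring

lemma psi_eq (y ε ν : ℝ) (hε : 0 < ε) (hν : 0 < ν) (m' : ℝ) :
    (∫ η, 2 * max 0 (|y - η| - ε) * gpdf m' ν η)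
      = 2 * ((m' - (y + ε)) * gsf m' ν (y + ε) + ν ^ 2 * gpdf m' ν (y + ε)
        + (((y - ε) - m') * gcdf m' ν (y - ε) + ν ^ 2 * gpdf m' ν (y - ε))) := by
  set a := y + ε with ha
  set b := y - ε with hb
  have hmax : ∀ η : ℝ, max 0 (|y - η| - ε) = max 0 (η - a) + max 0 (b - η) := by
    intro η
    rcases le_total η y with h | h
    · rw [abs_of_nonneg (by linarith)]
      have h1 : max 0 (η - a) = 0 := max_eq_left (by rw [ha]; linarith)
      have h2 : y - η - ε = b - η := by rw [hb]; ring
      rw [h1, h2, zero_add]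
    · rw [abs_of_nonpos (by linarith)]
      have h1 : max 0 (b - η) = 0 := max_eq_left (by rw [hb]; linarith)
      have h2 : -(y - η) - ε = η - a := by rw [ha]; ring
      rw [h1, h2, add_zero]
  have hind1 : ∀ η : ℝ, max 0 (η - a) * gpdf m' ν η
      = (Ioi a).indicator (fun η => (η - a) * gpdf m' ν η) η := by
    intro η
    by_cases h : a < η
    · rw [Set.indicator_of_mem (show η ∈ Ioi a from h), max_eq_right (by linarith)]
    · rw [Set.indicator_of_notMem (show η ∉ Ioi a from h),
        max_eq_left (by simp at h; linarith), zero_mul]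
  have hind2 : ∀ η : ℝ, max 0 (b - η) * gpdf m' ν η
      = (Iio b).indicator (fun η => (b - η) * gpdf m' ν η) η := by
    intro η
    by_cases h : η < b
    · rw [Set.indicator_of_mem (show η ∈ Iio b from h), max_eq_right (by linarith)]
    · rw [Set.indicator_of_notMem (show η ∉ Iio b from h),
        max_eq_left (by simp at h; linarith), zero_mul]
  have hptw : (fun η => 2 * max 0 (|y - η| - ε) * gpdf m' ν η)
      = fun η => 2 * ((Ioi a).indicator (fun η => (η - a) * gpdf m' ν η) η)
        + 2 * ((Iio b).indicator (fun η => (b - η) * gpdf m' ν η) η) := by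
    funext η
    rw [← hind1 η, ← hind2 η, hmax η]
    ring
  rw [hptw]
  have hi1 : Integrable ((Ioi a).indicator (fun η => (η - a) * gpdf m' ν η)) :=
    (integrable_sub_mul_gpdf hν m' a).indicator measurableSet_Ioi
  have hi2 : Integrable ((Iio b).indicator (fun η => (b - η) * gpdf m' ν η)) :=
    (integrable_sub_mul_gpdf' hν m' b).indicator measurableSet_Iio
  rw [integral_add (hi1.const_mul 2) (hi2.const_mul 2), integral_const_mul, integral_const_mul,
    integral_indicator measurableSet_Ioi, integral_indicator measurableSet_Iio,
    int_Ioi hν m' a, int_Iio hν m' b]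
  ring

lemma hasDerivAt_psi (y ε ν : ℝ) (hε : 0 < ε) (hν : 0 < ν) (m : ℝ) :
    HasDerivAt (fun m' => ∫ η, 2 * max 0 (|y - η| - ε) * gpdf m' ν η)
      (2 * (gsf m ν (y + ε) - gcdf m ν (y - ε))) m := by
  have hfun : (fun m' => ∫ η, 2 * max 0 (|y - η| - ε) * gpdf m' ν η)
      = fun m' => 2 * ((m' - (y + ε)) * gsf m' ν (y + ε) + ν ^ 2 * gpdf m' ν (y + ε)
        + (((y - ε) - m') * gcdf m' ν (y - ε) + ν ^ 2 * gpdf m' ν (y - ε))) :=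
    funext (psi_eq y ε ν hε hν)
  rw [hfun]
  have H1 := ((hasDerivAt_id m).sub_const (y + ε)).mul (hasDerivAt_gsf_m hν (y + ε) m)
  have H2 := (hasDerivAt_gpdf_m hν (y + ε) m).const_mul (ν ^ 2)
  have H3 := ((hasDerivAt_id m).const_sub (y - ε)).mul (hasDerivAt_gcdf_m hν (y - ε) m)
  have H4 := (hasDerivAt_gpdf_m hν (y - ε) m).const_mul (ν ^ 2)
  have H := ((H1.add H2).add (H3.add H4)).const_mul 2
  refine H.congr_deriv ?_
  have hν2 : (ν:ℝ) ^ 2 ≠ 0 := by positivity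
  simp only [id]
  field_simp
  ring

theorem svr_Psi2 (y ε ν : ℝ) (hε : 0 < ε) (hν : 0 < ν) (m : ℝ) :
    HasDerivAt (deriv (fun m' => ∫ η, 2 * max 0 (|y - η| - ε) * gpdf m' ν η))
      (2 * (gpdf m ν (y + ε) + gpdf m ν (y - ε))) m := by
  have hderiv : deriv (fun m' => ∫ η, 2 * max 0 (|y - η| - ε) * gpdf m' ν η)
      = fun m => 2 * (gsf m ν (y + ε) - gcdf m ν (y - ε)) :=
    funext fun m => (hasDerivAt_psi y ε ν hε hν m).deriv
  rw [hderiv]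
  have H := ((hasDerivAt_gsf_m hν (y + ε) m).sub (hasDerivAt_gcdf_m hν (y - ε) m)).const_mul 2
  refine H.congr_deriv ?_
  ring
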